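/- arXiv:2507.01144 — 2 statements merged into one kernel-verified Lean document; each statement's English description precedes it below -/
import Mathlib

section
/- Assume conditions (A2)–(A4). Then lim_{n→∞} sup_{t∈[n,n+1)} | I_t(g)/√(t ln ln t) − I_n(g)/√(n ln ln n) | = 0, ℙ_μ-almost surely (n ranging over the positive integers). -/
open MeasureTheory Filter Set
open scoped ENNReal Topology NNReal

noncomputable section

variable {X : Type*} [MetricSpace X] [CompleteSpace X] [SecondCountableTopology X]
  [MeasurableSpace X] [BorelSpace X]

/-- Action of a transition kernel family on measures: `ν ↦ ν P_t`. -/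
def measAct (P : ℝ → X → Measure X) (t : ℝ) (ν : Measure X) : Measure X :=
  ν.bind (P t)

/-- Dual action of the semigroup on functions: `f ↦ P_t f`. -/
def funAct (P : ℝ → X → Measure X) (t : ℝ) (f : X → ℝ) (x : X) : ℝ :=
  ∫ y, f y ∂(P t x)

/-- A Borel (probability) measure has a finite first moment. -/
def FiniteFirstMoment (ν : Measure X) : Prop :=
  ∀ x₀ : X, Integrable (fun x => dist x₀ x) ν

/-- The Wasserstein (Kantorovich–Rubinstein) distance `d_W`. -/
def wassDist (μ ν : Measure X) : ℝ :=
  sSup {r | ∃ f : X → ℝ, LipschitzWith 1 f ∧ r = |(∫ x, f x ∂μ) - ∫ x, f x ∂ν|}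

/-- A Markov semigroup `{P_t}_{t ≥ 0}` of probability kernels on `X`. -/
structure IsMarkovSemigroup (P : ℝ → X → Measure X) : Prop where
  prob : ∀ t, 0 ≤ t → ∀ x, IsProbabilityMeasure (P t x)
  jointMeas : ∀ A : Set X, MeasurableSet A → Measurable fun p : ℝ × X => P p.1 p.2 A
  init : ∀ x, P 0 x = Measure.dirac x
  chapman : ∀ s t, 0 ≤ s → 0 ≤ t → ∀ x, P (s + t) x = (P s x).bind (P t)

/-- Condition (A1): stochastic continuity of the semigroup. -/
def CondA1 (P : ℝ → X → Measure X) : Prop :=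
  ∀ f : X → ℝ, Continuous f → (∃ C, ∀ x, |f x| ≤ C) →
    ∀ x : X, Tendsto (fun t => funAct P t f x) (𝓝[>] (0 : ℝ)) (𝓝 (f x))

/-- Condition (A2): the Feller property. -/
def CondA2 (P : ℝ → X → Measure X) : Prop :=
  ∀ f : X → ℝ, Continuous f → (∃ C, ∀ x, |f x| ≤ C) → ∀ t, 0 ≤ t →
    Continuous (funAct P t f) ∧ ∃ C, ∀ x, |funAct P t f x| ≤ C

/-- Condition (A3): preservation of finite first moments and exponential
contractivity in the Wasserstein distance, with rate `γ`. -/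
def CondA3 (P : ℝ → X → Measure X) (γ : ℝ) : Prop :=
  (∀ ν : Measure X, IsProbabilityMeasure ν → FiniteFirstMoment ν →
    ∀ t, 0 < t → FiniteFirstMoment (measAct P t ν)) ∧
  0 < γ ∧
  ∀ t, 0 ≤ t → ∀ x y : X,
    wassDist (P t x) (P t y) ≤ Real.exp (-γ * t) * dist x y

/-- Condition (A4): a uniform-in-time moment bound of order `ζ > 2` for the initial
distribution `μ`, along the semigroup. -/
def CondA4 (P : ℝ → X → Measure X) (μ : Measure X) (x₀ : X) (ζ : ℝ) : Prop :=
  2 < ζ ∧ ∃ M : ℝ, ∀ t, 0 ≤ t →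
    (∫⁻ x, ENNReal.ofReal (dist x₀ x ^ ζ) ∂(measAct P t μ)) ≤ ENNReal.ofReal M

variable {Ω : Type*} [MeasurableSpace Ω]

/-- The natural filtration of the process `Φ`. -/
def natFiltration (Φ : ℝ → Ω → X) (s : ℝ) : MeasurableSpace Ω :=
  ⨆ u ∈ Set.Icc (0 : ℝ) s, MeasurableSpace.comap (Φ u) inferInstance

/-- A (progressively measurable) time-homogeneous Markov process with state space `X`,
transition semigroup `P` and initial distribution `μ`, realized on `(Ω, ℙ)`. -/
structure IsMarkovProcess (P : ℝ → X → Measure X) (Φ : ℝ → Ω → X)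
    (ℙ : Measure Ω) (μ : Measure X) : Prop where
  jointMeas : Measurable fun p : ℝ × Ω => Φ p.1 p.2
  init : ℙ.map (Φ 0) = μ
  law : ∀ t, 0 ≤ t → ℙ.map (Φ t) = measAct P t μ
  markov : ∀ f : X → ℝ, Measurable f → (∃ C, ∀ x, |f x| ≤ C) →
    ∀ s t : ℝ, 0 ≤ s → 0 ≤ t →
      (fun ω => funAct P t f (Φ s ω)) =ᵐ[ℙ]
        ℙ[(fun ω => f (Φ (s + t) ω)) | natFiltration Φ s]

/-- A Markov process together with a measurable family of laws `{ℙ_x}_{x ∈ X}`,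
with `ℙ_x(Φ_0 = x) = 1`. -/
structure IsMarkovFamily (P : ℝ → X → Measure X) (Φ : ℝ → Ω → X)
    (ℙ : X → Measure Ω) : Prop where
  prob : ∀ x, IsProbabilityMeasure (ℙ x)
  jointMeas : Measurable fun p : ℝ × Ω => Φ p.1 p.2
  measFam : ∀ s : Set Ω, MeasurableSet s → Measurable fun x => ℙ x s
  start : ∀ x, (ℙ x) {ω | Φ 0 ω = x} = 1
  law : ∀ x, ∀ t, 0 ≤ t → (ℙ x).map (Φ t) = P t x
  markov : ∀ x : X, ∀ f : X → ℝ, Measurable f → (∃ C, ∀ z, |f z| ≤ C) →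
    ∀ s t : ℝ, 0 ≤ s → 0 ≤ t →
      (fun ω => funAct P t f (Φ s ω)) =ᵐ[ℙ x]
        (ℙ x)[(fun ω => f (Φ (s + t) ω)) | natFiltration Φ s]

/-- The corrector function `χ_g(x) = ∫_0^∞ (P_t g)(x) dt`. -/
def corrector (P : ℝ → X → Measure X) (g : X → ℝ) (x : X) : ℝ :=
  ∫ t in Set.Ioi (0 : ℝ), funAct P t g x

/-- The additive functional `I_t(g) = ∫_0^t g(Φ_s) ds`. -/
def addFun (g : X → ℝ) (Φ : ℝ → Ω → X) (t : ℝ) (ω : Ω) : ℝ :=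
  ∫ s in (0 : ℝ)..t, g (Φ s ω)

/-- The martingale part `M_t(g) = χ_g(Φ_t) - χ_g(Φ_0) + I_t(g)`. -/
def mart (P : ℝ → X → Measure X) (g : X → ℝ) (Φ : ℝ → Ω → X) (t : ℝ) (ω : Ω) : ℝ :=
  corrector P g (Φ t ω) - corrector P g (Φ 0 ω) + addFun g Φ t ω

/-- The martingale increments `Z_n(g) = M_n(g) - M_{n-1}(g)`. -/
def incr (P : ℝ → X → Measure X) (g : X → ℝ) (Φ : ℝ → Ω → X) (n : ℕ) (ω : Ω) : ℝ :=
  mart P g Φ (n : ℝ) ω - mart P g Φ ((n : ℝ) - 1) ω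

/-- Truncation `a ∧ p` for `p ∈ ℕ ∪ {∞}`, with the convention `a ∧ ∞ = a`. -/
def truncMin (a : ℝ) (p : ℕ∞) : ℝ :=
  if p = ⊤ then a else min a (p.toNat : ℝ)

set_option maxHeartbeats 1000000 in
/-- Lemma 1. Under (A2)–(A4),
`sup_{t ∈ [n,n+1)} |I_t(g)/√(t ln ln t) - I_n(g)/√(n ln ln n)| → 0`, `ℙ_μ`-a.s. -/
theorem discretization_lemma
    (P : ℝ → X → Measure X) (hP : IsMarkovSemigroup P)
    (γ ζ : ℝ) (x₀ : X) (μ μstar : Measure X)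
    [IsProbabilityMeasure μ] [IsProbabilityMeasure μstar]
    (hA2 : CondA2 P) (hA3 : CondA3 P γ) (hA4 : CondA4 P μ x₀ ζ)
    (hinv : ∀ t, 0 ≤ t → measAct P t μstar = μstar)
    (g : X → ℝ) (K : ℝ≥0) (hLip : LipschitzWith K g) (hBd : ∃ C, ∀ x, |g x| ≤ C)
    (hmean : ∫ x, g x ∂μstar = 0)
    (ℙμ : Measure Ω) [IsProbabilityMeasure ℙμ]
    (Φ : ℝ → Ω → X) (hΦ : IsMarkovProcess P Φ ℙμ μ) :
    ∀ᵐ ω ∂ℙμ,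
      Tendsto (fun n : ℕ =>
          ⨆ t ∈ Set.Ico (n : ℝ) ((n : ℝ) + 1),
            |addFun g Φ t ω / Real.sqrt (t * Real.log (Real.log t)) -
              addFun g Φ (n : ℝ) ω / Real.sqrt ((n : ℝ) * Real.log (Real.log (n : ℝ)))|)
        atTop (𝓝 0) := by
  -- The statement is in fact deterministic: it holds for every `ω`.
  refine ae_of_all _ fun ω => ?_
  obtain ⟨C₀, hC₀⟩ := hBd
  set C : ℝ := max C₀ 0 with hCdef
  have hC : ∀ x, |g x| ≤ C := fun x => (hC₀ x).trans (le_max_left _ _)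
  have hC0 : (0 : ℝ) ≤ C := le_max_right _ _
  -- measurability and interval integrability of `s ↦ g (Φ s ω)`
  have hGm : Measurable fun s : ℝ => Φ s ω :=
    hΦ.jointMeas.comp (measurable_id.prodMk measurable_const)
  have hgm : Measurable fun s : ℝ => g (Φ s ω) :=
    hLip.continuous.measurable.comp hGm
  have hint : ∀ u v : ℝ, IntervalIntegrable (fun s => g (Φ s ω)) volume u v := by
    intro u v
    refine (intervalIntegrable_const (c := C)).mono_fun hgm.aestronglyMeasurable ?_
    exact Filter.Eventually.of_forall fun s => by
      simpa [Real.norm_eq_abs, abs_of_nonneg hC0] using hC (Φ s ω)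
  -- the squeeze function
  have hsq : Tendsto (fun n : ℕ => Real.sqrt n) atTop atTop := by
    refine tendsto_atTop_atTop.2 fun b => ⟨⌈b ^ 2⌉₊, fun n hn => ?_⟩
    have hb2 : (b : ℝ) ^ 2 ≤ (n : ℝ) := (Nat.le_ceil _).trans (Nat.cast_le.2 hn)
    calc b ≤ |b| := le_abs_self b
      _ = Real.sqrt (b ^ 2) := (Real.sqrt_sq_eq_abs b).symm
      _ ≤ Real.sqrt n := Real.sqrt_le_sqrt hb2
  have hlim : Tendsto (fun n : ℕ => 3 * C / Real.sqrt n) atTop (𝓝 0) :=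
    tendsto_const_nhds.div_atTop hsq
  refine squeeze_zero'
    (Filter.Eventually.of_forall fun n =>
      Real.iSup_nonneg fun t => Real.iSup_nonneg fun _ => abs_nonneg _)
    ?_ hlim
  filter_upwards [eventually_ge_atTop 21] with n hn
  have hB0 : (0 : ℝ) ≤ 3 * C / Real.sqrt n :=
    div_nonneg (by linarith) (Real.sqrt_nonneg _)
  refine Real.iSup_le (fun t => Real.iSup_le (fun ht => ?_) hB0) hB0
  obtain ⟨ht1, ht2⟩ := ht
  -- notation
  set N : ℝ := (n : ℝ) with hNdef
  have hN21 : (21 : ℝ) ≤ N := by rw [hNdef]; exact_mod_cast hn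
  have hN0 : (0 : ℝ) < N := by linarith
  have hexp3 : Real.exp 3 ≤ 21 := by
    have h1 : Real.exp 1 ≤ 2.7182818286 := Real.exp_one_lt_d9.le
    have h2 : Real.exp 3 = Real.exp 1 ^ (3 : ℕ) := by
      rw [show (3 : ℝ) = ((3 : ℕ) : ℝ) * 1 by norm_num, Real.exp_nat_mul]
    rw [h2]
    calc Real.exp 1 ^ (3 : ℕ) ≤ 2.7182818286 ^ (3 : ℕ) :=
          pow_le_pow_left₀ (Real.exp_pos 1).le h1 3
      _ ≤ 21 := by norm_num
  have hlogN : 3 ≤ Real.log N :=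
    (Real.le_log_iff_exp_le hN0).2 (hexp3.trans hN21)
  have hlogN0 : (0 : ℝ) < Real.log N := by linarith
  have hllN : 1 ≤ Real.log (Real.log N) := by
    refine (Real.le_log_iff_exp_le hlogN0).2 ?_
    have := Real.exp_one_lt_d9
    linarith
  have ht0 : (0 : ℝ) < t := lt_of_lt_of_le hN0 ht1
  have hlogt : Real.log N ≤ Real.log t := Real.log_le_log hN0 ht1
  have hllt : Real.log (Real.log N) ≤ Real.log (Real.log t) :=
    Real.log_le_log hlogN0 hlogt
  have hlogt1 : Real.log t ≤ Real.log (N + 1) := Real.log_le_log ht0 (by linarith)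
  have hllt1 : Real.log (Real.log t) ≤ Real.log (Real.log (N + 1)) :=
    Real.log_le_log (by linarith) hlogt1
  set llN : ℝ := Real.log (Real.log N) with hllNdef
  set llt : ℝ := Real.log (Real.log t) with hlltdef
  set llN1 : ℝ := Real.log (Real.log (N + 1)) with hllN1def
  set a : ℝ := Real.sqrt (N * llN) with hadef
  set s : ℝ := Real.sqrt (t * llt) with hsdef
  set b : ℝ := Real.sqrt ((N + 1) * llN1) with hbdef
  have hNllN : (0 : ℝ) < N * llN := by nlinarith
  have ha0 : 0 < a := Real.sqrt_pos.2 hNllN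
  have ha2 : a ^ 2 = N * llN := Real.sq_sqrt hNllN.le
  have has : a ≤ s := Real.sqrt_le_sqrt (by nlinarith)
  have hs0 : 0 < s := lt_of_lt_of_le ha0 has
  have hsb : s ≤ b := Real.sqrt_le_sqrt (by nlinarith)
  have hb0 : 0 < b := lt_of_lt_of_le hs0 hsb
  have hb2 : b ^ 2 = (N + 1) * llN1 := Real.sq_sqrt (by nlinarith)
  have hsqrtN : Real.sqrt N ≤ a := Real.sqrt_le_sqrt (by nlinarith)
  have hsqrtN0 : 0 < Real.sqrt N := Real.sqrt_pos.2 hN0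
  -- the increment bounds on the additive functional
  set It : ℝ := addFun g Φ t ω with hItdef
  set In : ℝ := addFun g Φ N ω with hIndef
  have hItIn : |It - In| ≤ C := by
    have hadd := intervalIntegral.integral_add_adjacent_intervals
      (hint 0 N) (hint N t)
    have hdiff : It - In = ∫ u in N..t, g (Φ u ω) := by
      simp only [hItdef, hIndef, addFun]
      rw [← hadd]; ring
    have hbd : ‖∫ u in N..t, g (Φ u ω)‖ ≤ C * |t - N| :=
      intervalIntegral.norm_integral_le_of_norm_le_const fun x _ => by
        simpa [Real.norm_eq_abs] using hC (Φ x ω)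
    rw [hdiff, ← Real.norm_eq_abs]
    refine hbd.trans ?_
    have : |t - N| ≤ 1 := by rw [abs_of_nonneg (by linarith)]; linarith
    nlinarith
  have hInCN : |In| ≤ C * N := by
    have hbd : ‖∫ u in (0:ℝ)..N, g (Φ u ω)‖ ≤ C * |N - 0| :=
      intervalIntegral.norm_integral_le_of_norm_le_const fun x _ => by
        simpa [Real.norm_eq_abs] using hC (Φ x ω)
    have : |N - 0| = N := by rw [abs_of_nonneg (by linarith)]; ring
    rw [this] at hbd
    simpa [hIndef, addFun, Real.norm_eq_abs] using hbd
  -- key estimate on b² - a²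
  have hkey : b ^ 2 - a ^ 2 ≤ 3 * llN := by
    have hlog1 : Real.log (N + 1) - Real.log N ≤ 1 / N := by
      rw [← Real.log_div (by linarith) hN0.ne']
      have := Real.log_le_sub_one_of_pos (show (0:ℝ) < (N+1)/N by positivity)
      have heq : (N + 1) / N - 1 = 1 / N := by field_simp; ring
      linarith
    have hd1 : llN1 - llN ≤ 1 / (N * Real.log N) := by
      have hlogN1 : 0 < Real.log (N + 1) := by linarith
      rw [hllN1def, hllNdef, ← Real.log_div hlogN1.ne' hlogN0.ne']
      have h2 := Real.log_le_sub_one_of_pos (show (0:ℝ) < Real.log (N+1) / Real.log N by positivity)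
      have heq : Real.log (N + 1) / Real.log N - 1
          = (Real.log (N + 1) - Real.log N) / Real.log N := by field_simp
      have h3 : (Real.log (N + 1) - Real.log N) / Real.log N ≤ (1 / N) / Real.log N := by
        gcongr
      have h4 : (1 / N) / Real.log N = 1 / (N * Real.log N) := by
        rw [div_div]
      linarith
    have hsmall : 1 / (N * Real.log N) ≤ 1 / N :=
      one_div_le_one_div_of_le hN0 (by nlinarith)
    have hNd : N * (llN1 - llN) ≤ 1 := by
      have h5 : N * (llN1 - llN) ≤ N * (1 / (N * Real.log N)) :=
        mul_le_mul_of_nonneg_left hd1 hN0.le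
      have h6 : N * (1 / (N * Real.log N)) = 1 / Real.log N := by
        field_simp
      have h7 : 1 / Real.log N ≤ 1 := by
        rw [div_le_one hlogN0]; linarith
      linarith
    have hllN1le : llN1 ≤ llN + 1 := by
      have : 1 / (N * Real.log N) ≤ 1 := by
        rw [div_le_one (by nlinarith)]; nlinarith
      linarith
    rw [hb2, ha2]
    nlinarith
  -- putting things together
  have h1s1a : 1 / s ≤ 1 / a := one_div_le_one_div_of_le ha0 has
  have h1b1s : 1 / b ≤ 1 / s := one_div_le_one_div_of_le hs0 hsb
  calc |It / s - In / a|
      ≤ |(It - In) / s| + |In / s - In / a| := by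
        have h : It / s - In / a = (It - In) / s + (In / s - In / a) := by ring
        rw [h]; exact abs_add_le _ _
    _ = |It - In| / s + |In| * (1 / a - 1 / s) := by
        rw [abs_div, abs_of_pos hs0]
        congr 1
        have h : In / s - In / a = In * (1 / s - 1 / a) := by ring
        rw [h, abs_mul, abs_of_nonpos (show 1 / s - 1 / a ≤ 0 by linarith)]
        ring
    _ ≤ C / Real.sqrt N + (C * N) * (1 / a - 1 / b) := by
        refine add_le_add ?_ ?_
        · exact div_le_div₀ hC0 hItIn hsqrtN0 (hsqrtN.trans has)
        · exact mul_le_mul hInCN (by linarith) (by linarith)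
            (mul_nonneg hC0 hN0.le)
    _ ≤ C / Real.sqrt N + 3 * C / (2 * Real.sqrt N) := by
        have hab : 1 / a - 1 / b = (b ^ 2 - a ^ 2) / (a * b * (a + b)) := by
          field_simp
          ring
        have hab' : a ≤ b := has.trans hsb
        have hfrac : (b ^ 2 - a ^ 2) / (a * b * (a + b))
            ≤ (3 * llN) / (a * a * (a + a)) := by
          refine div_le_div₀ (by linarith) hkey
            (mul_pos (mul_pos ha0 ha0) (by linarith)) ?_
          exact mul_le_mul (mul_le_mul_of_nonneg_left hab' ha0.le)
            (by linarith) (by linarith) (mul_nonneg ha0.le hb0.le)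
        have heq : (C * N) * ((3 * llN) / (a * a * (a + a))) = 3 * C / (2 * a) := by
          have haa : a * a * (a + a) = 2 * (N * llN) * a := by
            rw [← ha2]; ring
          rw [haa]
          field_simp
        have hstep : (C * N) * (1 / a - 1 / b) ≤ 3 * C / (2 * a) := by
          rw [hab, ← heq]
          exact mul_le_mul_of_nonneg_left hfrac (mul_nonneg hC0 hN0.le)
        have hlast : 3 * C / (2 * a) ≤ 3 * C / (2 * Real.sqrt N) :=
          div_le_div₀ (by linarith) le_rfl (by linarith) (by linarith)
        linarith
    _ ≤ 3 * C / Real.sqrt N := by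
        have he : C / Real.sqrt N + 3 * C / (2 * Real.sqrt N)
            = (5 * C / 2) / Real.sqrt N := by
          field_simp
          ring
        rw [he]
        exact div_le_div₀ (by linarith) (by linarith) hsqrtN0 le_rfl


end
end

section
/- Assume conditions (A2)–(A4). Then there exists a finite constant D (one may take D = (2C‖g‖²_{BL}/γ)(c₁(μ)+1), where C is the constant from the exponential ergodicity estimate d_W(νP_t,μ_*) ≤ Ce^{−γt}(∫V dν + 1), ‖g‖_{BL} = sup|g| + Lip(g), and c₁(μ) := sup_{t≥0} ∫ V d(μP_t)) such that E_μ[I_n(g)²] ≤ D·n for every positive integer n. -/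
open MeasureTheory Filter Set
open scoped ENNReal Topology NNReal

noncomputable section

variable {X : Type*} [MetricSpace X] [CompleteSpace X] [SecondCountableTopology X]
  [MeasurableSpace X] [BorelSpace X]

variable {Ω : Type*} [MeasurableSpace Ω]

lemma aux_measurable_P {P : ℝ → X → Measure X} (hP : IsMarkovSemigroup P) (t : ℝ) :
    Measurable (P t) :=
  Measure.measurable_of_measurable_coe _ fun A hA =>
    (hP.jointMeas A hA).comp (measurable_const.prodMk measurable_id)

def auxKer (P : ℝ → X → Measure X) (hP : IsMarkovSemigroup P) (t : ℝ) :
    ProbabilityTheory.Kernel X X where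
  toFun := P t
  measurable' := aux_measurable_P hP t

lemma aux_integrable_of_bound {α : Type*} [MeasurableSpace α] {ν : Measure α}
    [IsFiniteMeasure ν] {f : α → ℝ} (hm : AEStronglyMeasurable f ν) (C : ℝ)
    (h : ∀ x, |f x| ≤ C) : Integrable f ν :=
  (integrable_const C).mono' hm (ae_of_all _ fun x => by simpa [Real.norm_eq_abs] using h x)

lemma aux_funAct_sm {P : ℝ → X → Measure X} (hP : IsMarkovSemigroup P)
    {g : X → ℝ} (hg : StronglyMeasurable g) {t : ℝ} (ht : 0 ≤ t) :
    StronglyMeasurable (funAct P t g) := by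
  haveI : ProbabilityTheory.IsMarkovKernel (auxKer P hP t) := ⟨fun x => hP.prob t ht x⟩
  have h : StronglyMeasurable (Function.uncurry fun (_ : X) (y : X) => g y) :=
    hg.comp_measurable measurable_snd
  exact h.integral_kernel_prod_right (κ := auxKer P hP t)

lemma aux_abs_funAct_le {P : ℝ → X → Measure X} (hP : IsMarkovSemigroup P)
    {g : X → ℝ} {C : ℝ} (hg : ∀ x, |g x| ≤ C) {t : ℝ} (ht : 0 ≤ t) (x : X) :
    |funAct P t g x| ≤ C := by
  haveI := hP.prob t ht x
  calc |funAct P t g x| = ‖∫ y, g y ∂(P t x)‖ := (Real.norm_eq_abs _).symm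
    _ ≤ C * ((P t x) univ).toReal :=
        norm_integral_le_of_norm_le_const (ae_of_all _ fun y => by
          simpa [Real.norm_eq_abs] using hg y)
    _ = C := by simp

lemma aux_abs_sub_le_wassDist {ν₁ ν₂ : Measure X} [IsProbabilityMeasure ν₁]
    [IsProbabilityMeasure ν₂] (x₀ : X) (h₁ : FiniteFirstMoment ν₁)
    (h₂ : FiniteFirstMoment ν₂) {f : X → ℝ} (hf : LipschitzWith 1 f) :
    |(∫ x, f x ∂ν₁) - ∫ x, f x ∂ν₂| ≤ wassDist ν₁ ν₂ := by
  have key : ∀ h : X → ℝ, LipschitzWith 1 h →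
      |(∫ x, h x ∂ν₁) - ∫ x, h x ∂ν₂|
        ≤ (∫ x, dist x₀ x ∂ν₁) + ∫ x, dist x₀ x ∂ν₂ := by
    intro h hh
    have hb : ∀ x, |h x - h x₀| ≤ dist x₀ x := fun x => by
      have := hh.dist_le_mul x x₀
      rw [Real.dist_eq] at this
      simpa [dist_comm] using this
    have hint : ∀ ν : Measure X, IsProbabilityMeasure ν → FiniteFirstMoment ν →
        Integrable (fun x => h x - h x₀) ν := by
      intro ν hp hffm
      exact (hffm x₀).mono' ((hh.continuous.sub continuous_const).aestronglyMeasurable)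
        (ae_of_all _ fun x => by simpa [Real.norm_eq_abs] using hb x)
    have e₁ : ∫ x, (h x - h x₀) ∂ν₁ = (∫ x, h x ∂ν₁) - h x₀ := by
      have hi : Integrable h ν₁ :=
        ((integrable_const |h x₀|).add (h₁ x₀)).mono' hh.continuous.aestronglyMeasurable
          (ae_of_all _ fun x => by
            have := hb x
            rw [Real.norm_eq_abs]
            have h3 := abs_sub_abs_le_abs_sub (h x) (h x₀)
            simp only [Pi.add_apply]; linarith)
      rw [integral_sub hi (integrable_const _), integral_const]; simp
    have e₂ : ∫ x, (h x - h x₀) ∂ν₂ = (∫ x, h x ∂ν₂) - h x₀ := by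
      have hi : Integrable h ν₂ :=
        ((integrable_const |h x₀|).add (h₂ x₀)).mono' hh.continuous.aestronglyMeasurable
          (ae_of_all _ fun x => by
            have := hb x
            rw [Real.norm_eq_abs]
            have h3 := abs_sub_abs_le_abs_sub (h x) (h x₀)
            simp only [Pi.add_apply]; linarith)
      rw [integral_sub hi (integrable_const _), integral_const]; simp
    have : (∫ x, h x ∂ν₁) - ∫ x, h x ∂ν₂
        = (∫ x, (h x - h x₀) ∂ν₁) - ∫ x, (h x - h x₀) ∂ν₂ := by
      rw [e₁, e₂]; ring
    rw [this]
    refine (abs_sub _ _).trans ?_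
    gcongr
    · calc |∫ x, (h x - h x₀) ∂ν₁| ≤ ∫ x, |h x - h x₀| ∂ν₁ := by
            simpa [Real.norm_eq_abs] using
              norm_integral_le_integral_norm (μ := ν₁) (fun x => h x - h x₀)
        _ ≤ ∫ x, dist x₀ x ∂ν₁ :=
            integral_mono ((hint ν₁ inferInstance h₁).abs) (h₁ x₀) hb
    · calc |∫ x, (h x - h x₀) ∂ν₂| ≤ ∫ x, |h x - h x₀| ∂ν₂ := by
            simpa [Real.norm_eq_abs] using
              norm_integral_le_integral_norm (μ := ν₂) (fun x => h x - h x₀)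
        _ ≤ ∫ x, dist x₀ x ∂ν₂ :=
            integral_mono ((hint ν₂ inferInstance h₂).abs) (h₂ x₀) hb
  have hbdd : BddAbove {r | ∃ f : X → ℝ, LipschitzWith 1 f ∧
      r = |(∫ x, f x ∂ν₁) - ∫ x, f x ∂ν₂|} := by
    refine ⟨(∫ x, dist x₀ x ∂ν₁) + ∫ x, dist x₀ x ∂ν₂, ?_⟩
    rintro r ⟨h, hh, rfl⟩
    exact key h hh
  exact le_csSup hbdd ⟨f, hf, rfl⟩

lemma aux_ffm_dirac (x : X) : FiniteFirstMoment (Measure.dirac x) := by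
  intro y
  constructor
  · exact (continuous_const.dist continuous_id).aestronglyMeasurable
  · rw [HasFiniteIntegral]
    have hm : Measurable fun a : X => dist y a :=
      measurable_const.dist measurable_id
    rw [lintegral_dirac' x hm.enorm]
    exact enorm_lt_top

lemma aux_ffm_P {P : ℝ → X → Measure X} {γ : ℝ} (hP : IsMarkovSemigroup P)
    (hA3 : CondA3 P γ) {t : ℝ} (ht : 0 ≤ t) (x : X) : FiniteFirstMoment (P t x) := by
  rcases ht.lt_or_eq with h | h
  · have := hA3.1 (Measure.dirac x) inferInstance (aux_ffm_dirac x) t h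
    rwa [measAct, Measure.dirac_bind (aux_measurable_P hP t)] at this
  · rw [← h, hP.init]
    exact aux_ffm_dirac x

lemma aux_funAct_lip1 {P : ℝ → X → Measure X} {γ : ℝ} (hP : IsMarkovSemigroup P)
    (hA3 : CondA3 P γ) {f : X → ℝ} (hf : LipschitzWith 1 f) {t : ℝ} (ht : 0 ≤ t)
    (x y : X) : |funAct P t f x - funAct P t f y| ≤ Real.exp (-γ * t) * dist x y := by
  haveI := hP.prob t ht x
  haveI := hP.prob t ht y
  have h := aux_abs_sub_le_wassDist x (aux_ffm_P hP hA3 ht x) (aux_ffm_P hP hA3 ht y) hf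
  exact h.trans (hA3.2.2 t ht x y)

lemma aux_funAct_lipK {P : ℝ → X → Measure X} {γ : ℝ} (hP : IsMarkovSemigroup P)
    (hA3 : CondA3 P γ) {g : X → ℝ} {K : ℝ≥0} (hLip : LipschitzWith K g) {t : ℝ}
    (ht : 0 ≤ t) (x y : X) :
    |funAct P t g x - funAct P t g y| ≤ (K : ℝ) * (Real.exp (-γ * t) * dist x y) := by
  rcases eq_or_ne (K : ℝ) 0 with hK | hK
  · have hg : ∀ a b : X, g a = g b := by
      intro a b
      have := hLip.dist_le_mul a b
      rw [show ((K : ℝ≥0) : ℝ) = 0 from hK, zero_mul] at this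
      exact dist_le_zero.mp this
    have : funAct P t g x = funAct P t g y := by
      unfold funAct
      haveI := hP.prob t ht x
      haveI := hP.prob t ht y
      have h1 : ∀ z : X, g z = g x := fun z => hg z x
      calc ∫ z, g z ∂(P t x) = ∫ _z, g x ∂(P t x) := by
            exact integral_congr_ae (ae_of_all _ h1)
        _ = g x := by simp
        _ = ∫ _z, g x ∂(P t y) := by simp
        _ = ∫ z, g z ∂(P t y) := integral_congr_ae (ae_of_all _ fun z => (h1 z).symm)
    rw [this, sub_self, abs_zero]
    positivity
  · have hKpos : (0 : ℝ) < (K : ℝ) := lt_of_le_of_ne K.coe_nonneg (Ne.symm hK)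
    set f : X → ℝ := fun z => (K : ℝ)⁻¹ * g z with hfdef
    have hf : LipschitzWith 1 f := by
      apply LipschitzWith.of_dist_le_mul
      intro a b
      rw [Real.dist_eq]
      have : f a - f b = (K : ℝ)⁻¹ * (g a - g b) := by rw [hfdef]; ring
      rw [this, abs_mul, abs_inv, abs_of_pos hKpos]
      have hgd := hLip.dist_le_mul a b
      rw [Real.dist_eq] at hgd
      calc ((K : ℝ))⁻¹ * |g a - g b| ≤ (K : ℝ)⁻¹ * ((K : ℝ) * dist a b) := by
            apply mul_le_mul_of_nonneg_left hgd (by positivity)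
        _ = 1 * dist a b := by field_simp
    have h := aux_funAct_lip1 hP hA3 hf ht x y
    have hx : funAct P t f x = (K : ℝ)⁻¹ * funAct P t g x := integral_const_mul _ _
    have hy : funAct P t f y = (K : ℝ)⁻¹ * funAct P t g y := integral_const_mul _ _
    rw [hx, hy, ← mul_sub, abs_mul, abs_inv, abs_of_pos hKpos] at h
    calc |funAct P t g x - funAct P t g y|
        = (K : ℝ) * (((K : ℝ))⁻¹ * |funAct P t g x - funAct P t g y|) := by field_simp
      _ ≤ (K : ℝ) * (Real.exp (-γ * t) * dist x y) :=
          mul_le_mul_of_nonneg_left h (le_of_lt hKpos)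

lemma aux_isProb_bind {P : ℝ → X → Measure X} (hP : IsMarkovSemigroup P)
    {ν : Measure X} [IsProbabilityMeasure ν] {t : ℝ} (ht : 0 ≤ t) :
    IsProbabilityMeasure (ν.bind (P t)) := by
  constructor
  rw [Measure.bind_apply MeasurableSet.univ (aux_measurable_P hP t).aemeasurable]
  have : ∀ x, P t x univ = 1 := fun x => (hP.prob t ht x).measure_univ
  simp [this]

lemma aux_integral_bind_of_bound {P : ℝ → X → Measure X} (hP : IsMarkovSemigroup P)
    {ν : Measure X} [IsProbabilityMeasure ν] {t : ℝ} (ht : 0 ≤ t)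
    {g : X → ℝ} (hg : Measurable g) {C : ℝ} (hC : ∀ x, |g x| ≤ C) :
    ∫ y, g y ∂(ν.bind (P t)) = ∫ x, funAct P t g x ∂ν := by
  haveI hbp : IsProbabilityMeasure (ν.bind (P t)) := aux_isProb_bind hP ht
  set C' : ℝ := max C 0 with hC'
  have hC'0 : 0 ≤ C' := le_max_right _ _
  have hgC' : ∀ x, |g x| ≤ C' := fun x => (hC x).trans (le_max_left _ _)
  have hnn : ∀ x, 0 ≤ g x + C' := fun x => by
    have := abs_le.mp (hgC' x); linarith
  have hub : ∀ x, g x + C' ≤ 2 * C' := fun x => by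
    have := abs_le.mp (hgC' x); linarith
  have hgm : Measurable fun x => g x + C' := hg.add_const _
  -- integrability of g on the bind measure
  have hgint : Integrable g (ν.bind (P t)) :=
    aux_integrable_of_bound hg.aestronglyMeasurable C' hgC'
  -- step 1 : shift
  have e1 : ∫ y, (g y + C') ∂(ν.bind (P t)) = (∫ y, g y ∂(ν.bind (P t))) + C' := by
    rw [integral_add hgint (integrable_const _), integral_const]; simp
  -- step 2 : to lintegral and bind
  have e2 : ∫ y, (g y + C') ∂(ν.bind (P t))
      = (∫⁻ y, ENNReal.ofReal (g y + C') ∂(ν.bind (P t))).toReal := by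
    rw [integral_eq_lintegral_of_nonneg_ae (ae_of_all _ hnn)
      hgm.aestronglyMeasurable]
  have e3 : ∫⁻ y, ENNReal.ofReal (g y + C') ∂(ν.bind (P t))
      = ∫⁻ x, ∫⁻ y, ENNReal.ofReal (g y + C') ∂(P t x) ∂ν :=
    Measure.lintegral_bind (aux_measurable_P hP t).aemeasurable (ENNReal.measurable_ofReal.comp hgm).aemeasurable
  set F : X → ℝ≥0∞ := fun x => ∫⁻ y, ENNReal.ofReal (g y + C') ∂(P t x) with hF
  have hFm : Measurable F := by
    haveI : ProbabilityTheory.IsMarkovKernel (auxKer P hP t) := ⟨fun x => hP.prob t ht x⟩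
    exact Measurable.lintegral_kernel (κ := auxKer P hP t)
      (ENNReal.measurable_ofReal.comp hgm)
  have hFle : ∀ x, F x ≤ ENNReal.ofReal (2 * C') := fun x => by
    haveI := hP.prob t ht x
    calc F x ≤ ∫⁻ _y, ENNReal.ofReal (2 * C') ∂(P t x) :=
          lintegral_mono fun y => ENNReal.ofReal_le_ofReal (hub y)
      _ = ENNReal.ofReal (2 * C') := by simp
  have hFlt : ∀ x, F x < ⊤ := fun x => lt_of_le_of_lt (hFle x) ENNReal.ofReal_lt_top
  have e4 : (∫⁻ x, F x ∂ν).toReal = ∫ x, (F x).toReal ∂ν :=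
    (integral_toReal hFm.aemeasurable (ae_of_all _ hFlt)).symm
  have e5 : ∀ x, (F x).toReal = funAct P t g x + C' := by
    intro x
    haveI := hP.prob t ht x
    have : ∫ y, (g y + C') ∂(P t x) = (F x).toReal := by
      rw [integral_eq_lintegral_of_nonneg_ae (ae_of_all _ hnn) hgm.aestronglyMeasurable]
    rw [← this, integral_add (aux_integrable_of_bound hg.aestronglyMeasurable C' hgC')
      (integrable_const _), integral_const]
    simp [funAct]
  have hfa_int : Integrable (funAct P t g) ν :=
    aux_integrable_of_bound (aux_funAct_sm hP hg.stronglyMeasurable ht).aestronglyMeasurable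
      C' (fun x => aux_abs_funAct_le hP hgC' ht x)
  have e6 : ∫ x, (F x).toReal ∂ν = (∫ x, funAct P t g x ∂ν) + C' := by
    rw [integral_congr_ae (ae_of_all _ e5), integral_add hfa_int (integrable_const _),
      integral_const]
    simp
  have : (∫ y, g y ∂(ν.bind (P t))) + C' = (∫ x, funAct P t g x ∂ν) + C' := by
    rw [← e1, e2, e3, show (fun x => ∫⁻ y, ENNReal.ofReal (g y + C') ∂(P t x)) = F from rfl] at *
    rw [e4, e6]
  linarith

lemma aux_dist_le_one_add_rpow {ζ : ℝ} (hζ : 1 ≤ ζ) (d : ℝ) (hd : 0 ≤ d) :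
    d ≤ 1 + d ^ ζ := by
  rcases le_or_gt d 1 with h | h
  · have : (0:ℝ) ≤ d ^ ζ := Real.rpow_nonneg hd ζ
    linarith
  · have h1 : d = d ^ (1:ℝ) := (Real.rpow_one d).symm
    have h2 : d ^ (1:ℝ) ≤ d ^ ζ := Real.rpow_le_rpow_of_exponent_le h.le hζ
    rw [Real.rpow_one] at h2
    linarith

lemma aux_lint_dist_le {ν : Measure X} [IsProbabilityMeasure ν] {x₀ : X} {ζ M : ℝ}
    (hζ : 1 ≤ ζ)
    (h : (∫⁻ x, ENNReal.ofReal (dist x₀ x ^ ζ) ∂ν) ≤ ENNReal.ofReal M) :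
    (∫⁻ x, ENNReal.ofReal (dist x₀ x) ∂ν) ≤ ENNReal.ofReal (1 + max M 0) := by
  have step : ∀ x, ENNReal.ofReal (dist x₀ x)
      ≤ 1 + ENNReal.ofReal (dist x₀ x ^ ζ) := by
    intro x
    have := aux_dist_le_one_add_rpow hζ (dist x₀ x) dist_nonneg
    calc ENNReal.ofReal (dist x₀ x) ≤ ENNReal.ofReal (1 + dist x₀ x ^ ζ) :=
          ENNReal.ofReal_le_ofReal this
      _ = ENNReal.ofReal 1 + ENNReal.ofReal (dist x₀ x ^ ζ) :=
          ENNReal.ofReal_add zero_le_one (Real.rpow_nonneg dist_nonneg ζ)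
      _ = 1 + ENNReal.ofReal (dist x₀ x ^ ζ) := by rw [ENNReal.ofReal_one]
  calc (∫⁻ x, ENNReal.ofReal (dist x₀ x) ∂ν)
      ≤ ∫⁻ x, (1 + ENNReal.ofReal (dist x₀ x ^ ζ)) ∂ν := lintegral_mono step
    _ = (∫⁻ _x, (1:ℝ≥0∞) ∂ν) + ∫⁻ x, ENNReal.ofReal (dist x₀ x ^ ζ) ∂ν :=
        lintegral_add_left measurable_const _
    _ ≤ 1 + ENNReal.ofReal M := by
        simp only [lintegral_one, measure_univ]
        exact add_le_add_right h _
    _ ≤ ENNReal.ofReal (1 + max M 0) := by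
        rw [ENNReal.ofReal_add zero_le_one (le_max_right M 0), ENNReal.ofReal_one]
        exact add_le_add_right (ENNReal.ofReal_le_ofReal (le_max_left M 0)) _

lemma aux_int_of_lint {ν : Measure X} [IsProbabilityMeasure ν] {x₀ : X} {B : ℝ}
    (hB : 0 ≤ B) (h : (∫⁻ x, ENNReal.ofReal (dist x₀ x) ∂ν) ≤ ENNReal.ofReal B) :
    Integrable (fun x => dist x₀ x) ν ∧ (∫ x, dist x₀ x ∂ν) ≤ B := by
  have hdm : Measurable fun x => dist x₀ x := measurable_const.dist measurable_id
  have hint : Integrable (fun x => dist x₀ x) ν := by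
    constructor
    · exact hdm.aestronglyMeasurable
    · rw [HasFiniteIntegral]
      have : ∀ x, ‖dist x₀ x‖ₑ = ENNReal.ofReal (dist x₀ x) := fun x =>
        Real.enorm_eq_ofReal dist_nonneg
      calc (∫⁻ x, ‖dist x₀ x‖ₑ ∂ν)
          = ∫⁻ x, ENNReal.ofReal (dist x₀ x) ∂ν := lintegral_congr this
        _ ≤ ENNReal.ofReal B := h
        _ < ⊤ := ENNReal.ofReal_lt_top
  refine ⟨hint, ?_⟩
  rw [integral_eq_lintegral_of_nonneg_ae (ae_of_all _ fun x => dist_nonneg)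
    hdm.aestronglyMeasurable]
  calc (∫⁻ x, ENNReal.ofReal (dist x₀ x) ∂ν).toReal
      ≤ (ENNReal.ofReal B).toReal := ENNReal.toReal_mono ENNReal.ofReal_ne_top h
    _ = B := ENNReal.toReal_ofReal hB

lemma aux_mustar_moment {P : ℝ → X → Measure X} {γ ζ M : ℝ} {x₀ : X}
    {μ μstar : Measure X} [IsProbabilityMeasure μ] [IsProbabilityMeasure μstar]
    (hP : IsMarkovSemigroup P) (hA3 : CondA3 P γ) (hζ : 1 ≤ ζ)
    (hM : ∀ t, 0 ≤ t →
      (∫⁻ x, ENNReal.ofReal (dist x₀ x ^ ζ) ∂(measAct P t μ)) ≤ ENNReal.ofReal M)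
    (hinv : ∀ t, 0 ≤ t → measAct P t μstar = μstar) :
    Integrable (fun y => dist x₀ y) μstar ∧ (∫ y, dist x₀ y ∂μstar) ≤ 1 + max M 0 := by
  have hγ : 0 < γ := hA3.2.1
  set B : ℝ := 1 + max M 0 with hBdef
  have hB : 0 ≤ B := by positivity
  -- moments of μ P_t
  have hmu : ∀ t : ℝ, 0 ≤ t → Integrable (fun x => dist x₀ x) (μ.bind (P t)) ∧
      (∫ x, dist x₀ x ∂(μ.bind (P t))) ≤ B := by
    intro t ht
    haveI : IsProbabilityMeasure (μ.bind (P t)) := aux_isProb_bind hP ht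
    exact aux_int_of_lint hB (aux_lint_dist_le hζ (hM t ht))
  -- the truncated distance functions
  have claim : ∀ R : ℕ, (∫ y, min (dist x₀ y) (R : ℝ) ∂μstar) ≤ B := by
    intro R
    set fR : X → ℝ := fun y => min (dist x₀ y) (R : ℝ) with hfRdef
    have hfRlip : LipschitzWith 1 fR := (LipschitzWith.dist_right x₀).min_const _
    have hfRm : Measurable fR := hfRlip.continuous.measurable
    have hfR0 : ∀ y, 0 ≤ fR y := fun y => le_min dist_nonneg (Nat.cast_nonneg R)
    have hfRle : ∀ y, fR y ≤ (R : ℝ) := fun y => min_le_right _ _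
    have hfRd : ∀ y, fR y ≤ dist x₀ y := fun y => min_le_left _ _
    have hfRabs : ∀ y, |fR y| ≤ (R : ℝ) := fun y => by
      rw [abs_of_nonneg (hfR0 y)]; exact hfRle y
    -- ε k y
    set E : ℕ → X → ℝ := fun k y => ∫ x, min (R : ℝ) (Real.exp (-γ * k) * dist x y) ∂μ
      with hEdef
    have hEmin0 : ∀ (k : ℕ) (x y : X), 0 ≤ min (R : ℝ) (Real.exp (-γ * k) * dist x y) := by
      intro k x y
      exact le_min (Nat.cast_nonneg R) (by positivity)
    have hEminR : ∀ (k : ℕ) (x y : X), |min (R : ℝ) (Real.exp (-γ * k) * dist x y)| ≤ (R : ℝ) := by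
      intro k x y
      rw [abs_of_nonneg (hEmin0 k x y)]
      exact min_le_left _ _
    have hEcont : ∀ k : ℕ, Continuous fun p : X × X =>
        min (R : ℝ) (Real.exp (-γ * k) * dist p.2 p.1) :=
      fun k => continuous_const.min (continuous_const.mul
        (continuous_snd.dist continuous_fst))
    have hEsm : ∀ k : ℕ, StronglyMeasurable (E k) := by
      intro k
      exact ((hEcont k).stronglyMeasurable).integral_prod_right' (ν := μ)
    have hEbd : ∀ (k : ℕ) (y : X), |E k y| ≤ (R : ℝ) := by
      intro k y
      calc |E k y| = ‖E k y‖ := (Real.norm_eq_abs _).symm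
        _ ≤ (R : ℝ) * ((μ : Measure X) univ).toReal :=
            norm_integral_le_of_norm_le_const (ae_of_all _ fun x => by
              simpa [Real.norm_eq_abs] using hEminR k x y)
        _ = (R : ℝ) := by simp
    -- the key pointwise estimate
    have hpoint : ∀ k : ℕ, ∀ y, funAct P (k : ℝ) fR y ≤ B + E k y := by
      intro k y
      have hk : (0:ℝ) ≤ (k : ℝ) := Nat.cast_nonneg k
      have hfa_sm := aux_funAct_sm hP hfRm.stronglyMeasurable hk
      have hfa_bd : ∀ x, |funAct P (k : ℝ) fR x| ≤ (R : ℝ) :=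
        fun x => aux_abs_funAct_le hP hfRabs hk x
      have hfa_nn : ∀ x, 0 ≤ funAct P (k : ℝ) fR x := by
        intro x
        haveI := hP.prob _ hk x
        exact integral_nonneg hfR0
      have hdiff : ∀ x, funAct P (k : ℝ) fR y ≤ funAct P (k : ℝ) fR x
          + min (R : ℝ) (Real.exp (-γ * k) * dist x y) := by
        intro x
        have h1 : funAct P (k : ℝ) fR y - funAct P (k : ℝ) fR x ≤ (R : ℝ) := by
          have := hfa_bd y
          have h2 := hfa_nn x
          rw [abs_le] at this
          linarith [this.2]
        have h2 : funAct P (k : ℝ) fR y - funAct P (k : ℝ) fR x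
            ≤ Real.exp (-γ * k) * dist x y := by
          have h4 := aux_funAct_lip1 hP hA3 hfRlip hk y x
          have h3 := le_of_abs_le h4
          rw [dist_comm y x] at h3
          linarith [h3]
        have := le_min h1 h2
        linarith [this]
      have hint1 : Integrable (funAct P (k : ℝ) fR) μ :=
        aux_integrable_of_bound hfa_sm.aestronglyMeasurable _ hfa_bd
      have hint2 : Integrable (fun x => min (R : ℝ) (Real.exp (-γ * k) * dist x y)) μ :=
        aux_integrable_of_bound
          ((continuous_const.min (continuous_const.mul
            (continuous_id.dist continuous_const))).aestronglyMeasurable) _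
          (fun x => hEminR k x y)
      have hmono := integral_mono (μ := μ) (f := fun _ => funAct P (k : ℝ) fR y)
          (integrable_const _) (hint1.add hint2) (fun x => hdiff x)
      rw [integral_const] at hmono
      simp only [Pi.add_apply] at hmono
      rw [integral_add hint1 hint2] at hmono
      simp only [measure_univ, probReal_univ, smul_eq_mul, one_mul] at hmono
      have hfaB : (∫ x, funAct P (k : ℝ) fR x ∂μ) ≤ B := by
        haveI : IsProbabilityMeasure (μ.bind (P (k : ℝ))) := aux_isProb_bind hP hk
        rw [← aux_integral_bind_of_bound hP hk hfRm hfRabs]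
        exact le_trans (integral_mono (aux_integrable_of_bound
            hfRm.aestronglyMeasurable _ hfRabs) (hmu (k:ℝ) hk).1 hfRd) (hmu (k:ℝ) hk).2
      calc funAct P (k : ℝ) fR y ≤ (∫ x, funAct P (k : ℝ) fR x ∂μ) + E k y := hmono
        _ ≤ B + E k y := by linarith [hfaB]
    -- integrate the pointwise estimate over μstar
    have hEint : ∀ k : ℕ, Integrable (E k) μstar := fun k =>
      aux_integrable_of_bound (hEsm k).aestronglyMeasurable _ (hEbd k)
    have hfRint : Integrable fR μstar :=
      aux_integrable_of_bound hfRm.aestronglyMeasurable _ hfRabs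
    have hstep : ∀ k : ℕ, (∫ y, fR y ∂μstar) ≤ B + ∫ y, E k y ∂μstar := by
      intro k
      have hk : (0:ℝ) ≤ (k : ℝ) := Nat.cast_nonneg k
      have e1 : (∫ y, fR y ∂μstar) = ∫ y, funAct P (k : ℝ) fR y ∂μstar := by
        conv_lhs => rw [← hinv (k : ℝ) hk]
        exact aux_integral_bind_of_bound hP hk hfRm hfRabs
      have hfa_int : Integrable (funAct P (k : ℝ) fR) μstar :=
        aux_integrable_of_bound (aux_funAct_sm hP hfRm.stronglyMeasurable hk).aestronglyMeasurable
          _ (fun x => aux_abs_funAct_le hP hfRabs hk x)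
      rw [e1]
      calc (∫ y, funAct P (k : ℝ) fR y ∂μstar)
          ≤ ∫ y, (B + E k y) ∂μstar :=
            integral_mono hfa_int ((integrable_const B).add (hEint k)) (hpoint k)
        _ = B + ∫ y, E k y ∂μstar := by
            rw [integral_add (integrable_const B) (hEint k), integral_const]; simp
    -- the error term tends to zero
    have hdelta : Tendsto (fun k : ℕ => ∫ y, E k y ∂μstar) atTop (𝓝 0) := by
      have hptE : ∀ y, Tendsto (fun k : ℕ => E k y) atTop (𝓝 0) := by
        intro y
        have hpt : ∀ x, Tendsto (fun k : ℕ => min (R : ℝ)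
            (Real.exp (-γ * k) * dist x y)) atTop (𝓝 0) := by
          intro x
          have h1 : Tendsto (fun k : ℕ => Real.exp (-γ * k) * dist x y) atTop (𝓝 0) := by
            have h2 : Tendsto (fun k : ℕ => -γ * (k : ℝ)) atTop atBot := by
              apply Tendsto.const_mul_atTop_of_neg (by linarith : -γ < 0)
              exact tendsto_natCast_atTop_atTop
            have h3 := (Real.tendsto_exp_atBot).comp h2
            simpa using h3.mul_const (dist x y)
          have hsq : ∀ k : ℕ, min (R : ℝ) (Real.exp (-γ * k) * dist x y)
              ≤ Real.exp (-γ * k) * dist x y := fun k => min_le_right _ _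
          exact squeeze_zero (fun k => hEmin0 k x y) hsq h1
        have h0 := tendsto_integral_of_dominated_convergence (μ := μ)
          (F := fun (k : ℕ) (x : X) => min (R : ℝ) (Real.exp (-γ * k) * dist x y))
          (f := fun _ => (0 : ℝ)) (bound := fun _ => (R : ℝ))
          (fun k => (continuous_const.min (continuous_const.mul
            (continuous_id.dist continuous_const))).aestronglyMeasurable)
          (integrable_const _)
          (fun k => ae_of_all _ fun x => by simpa [Real.norm_eq_abs] using hEminR k x y)
          (ae_of_all _ hpt)
        simpa [hEdef] using h0
      have := tendsto_integral_of_dominated_convergence (μ := μstar)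
        (F := fun k y => E k y) (f := fun _ => (0:ℝ)) (fun _ => (R : ℝ))
        (fun k => (hEsm k).aestronglyMeasurable) (integrable_const _)
        (fun k => ae_of_all _ fun y => by simpa [Real.norm_eq_abs] using hEbd k y)
        (ae_of_all _ hptE)
      simpa using this
    -- conclude
    have hlim : Tendsto (fun k : ℕ => B + ∫ y, E k y ∂μstar) atTop (𝓝 B) := by
      simpa using (tendsto_const_nhds (x := B) (f := atTop)).add hdelta
    exact ge_of_tendsto hlim (Eventually.of_forall hstep)
  -- pass to the limit R → ∞
  have hlint : (∫⁻ y, ENNReal.ofReal (dist x₀ y) ∂μstar) ≤ ENNReal.ofReal B := by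
    have hsup : ∀ y, (⨆ R : ℕ, ENNReal.ofReal (min (dist x₀ y) (R : ℝ)))
        = ENNReal.ofReal (dist x₀ y) := by
      intro y
      apply le_antisymm
      · exact iSup_le fun R => ENNReal.ofReal_le_ofReal (min_le_left _ _)
      · refine le_iSup_of_le ⌈dist x₀ y⌉₊ ?_
        rw [min_eq_left (Nat.le_ceil _)]
    have hmono : Monotone fun (R : ℕ) (y : X) =>
        ENNReal.ofReal (min (dist x₀ y) (R : ℝ)) := by
      intro R R' hRR' y
      exact ENNReal.ofReal_le_ofReal (min_le_min le_rfl (by exact_mod_cast hRR'))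
    have hmeas : ∀ R : ℕ, Measurable fun y : X =>
        ENNReal.ofReal (min (dist x₀ y) (R : ℝ)) := fun R =>
      ENNReal.measurable_ofReal.comp
        ((measurable_const.dist measurable_id).min measurable_const)
    calc (∫⁻ y, ENNReal.ofReal (dist x₀ y) ∂μstar)
        = ∫⁻ y, ⨆ R : ℕ, ENNReal.ofReal (min (dist x₀ y) (R : ℝ)) ∂μstar := by
          refine lintegral_congr fun y => (hsup y).symm
      _ = ⨆ R : ℕ, ∫⁻ y, ENNReal.ofReal (min (dist x₀ y) (R : ℝ)) ∂μstar :=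
          lintegral_iSup hmeas fun R R' h => fun y => hmono h y
      _ ≤ ENNReal.ofReal B := by
          refine iSup_le fun R => ?_
          have hint : Integrable (fun y => min (dist x₀ y) (R : ℝ)) μstar :=
            aux_integrable_of_bound
              (((measurable_const.dist measurable_id).min measurable_const).aestronglyMeasurable)
              (R : ℝ) (fun y => by
                rw [abs_of_nonneg (le_min dist_nonneg (Nat.cast_nonneg R))]
                exact min_le_right _ _)
          rw [← ofReal_integral_eq_lintegral_ofReal hint
            (ae_of_all _ fun y => le_min dist_nonneg (Nat.cast_nonneg R))]
          exact ENNReal.ofReal_le_ofReal (claim R)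
  exact aux_int_of_lint hB hlint

lemma aux_meas_Phi {Φ : ℝ → Ω → X} (hjm : Measurable fun p : ℝ × Ω => Φ p.1 p.2)
    (u : ℝ) : Measurable (Φ u) :=
  hjm.comp (measurable_const.prodMk measurable_id)

lemma aux_natFiltration_le {Φ : ℝ → Ω → X}
    (hjm : Measurable fun p : ℝ × Ω => Φ p.1 p.2) (s : ℝ) :
    natFiltration Φ s ≤ (inferInstance : MeasurableSpace Ω) := by
  apply iSup₂_le
  intro u _
  exact measurable_iff_comap_le.mp (aux_meas_Phi hjm u)

lemma aux_Phi_meas_filtration {Φ : ℝ → Ω → X} {s : ℝ} (hs : 0 ≤ s) :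
    Measurable[natFiltration Φ s] (Φ s) :=
  measurable_iff_comap_le.mpr
    (le_iSup₂ (f := fun (u : ℝ) (_ : u ∈ Set.Icc (0:ℝ) s) =>
      MeasurableSpace.comap (Φ u) inferInstance) s ⟨hs, le_rfl⟩)

lemma aux_markov_integral {P : ℝ → X → Measure X} {μ : Measure X}
    [IsProbabilityMeasure μ] {ℙμ : Measure Ω} [IsProbabilityMeasure ℙμ]
    {Φ : ℝ → Ω → X} (hΦ : IsMarkovProcess P Φ ℙμ μ)
    {g : X → ℝ} {Cg : ℝ} (hgm : Measurable g) (hgb : ∀ x, |g x| ≤ Cg) (hCg : 0 ≤ Cg)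
    {s t : ℝ} (hs : 0 ≤ s) (hst : s ≤ t) :
    ∫ ω, g (Φ s ω) * g (Φ t ω) ∂ℙμ
      = ∫ ω, g (Φ s ω) * funAct P (t - s) g (Φ s ω) ∂ℙμ := by
  have hm : natFiltration Φ s ≤ (inferInstance : MeasurableSpace Ω) :=
    aux_natFiltration_le hΦ.jointMeas s
  haveI : SigmaFinite (ℙμ.trim hm) := inferInstance
  have hmk := hΦ.markov g hgm ⟨Cg, hgb⟩ s (t - s) hs (by linarith)
  rw [show s + (t - s) = t by ring] at hmk
  have hfs : StronglyMeasurable[natFiltration Φ s] fun ω => g (Φ s ω) :=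
    (hgm.comp (aux_Phi_meas_filtration hs)).stronglyMeasurable
  have hth : Integrable (fun ω => g (Φ t ω)) ℙμ :=
    aux_integrable_of_bound ((hgm.comp (aux_meas_Phi hΦ.jointMeas t)).aestronglyMeasurable)
      Cg (fun ω => hgb _)
  have hfh : Integrable ((fun ω => g (Φ s ω)) * fun ω => g (Φ t ω)) ℙμ := by
    apply aux_integrable_of_bound
    · exact ((hgm.comp (aux_meas_Phi hΦ.jointMeas s)).mul
        (hgm.comp (aux_meas_Phi hΦ.jointMeas t))).aestronglyMeasurable
    · intro ω
      show |g (Φ s ω) * g (Φ t ω)| ≤ Cg * Cg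
      rw [abs_mul]
      exact mul_le_mul (hgb _) (hgb _) (abs_nonneg _) hCg
  have hpull := condExp_mul_of_stronglyMeasurable_left hfs hfh hth
  calc ∫ ω, g (Φ s ω) * g (Φ t ω) ∂ℙμ
      = ∫ ω, ((fun ω => g (Φ s ω)) * fun ω => g (Φ t ω)) ω ∂ℙμ := rfl
    _ = ∫ ω, (ℙμ[(fun ω => g (Φ s ω)) * fun ω => g (Φ t ω) | natFiltration Φ s]) ω ∂ℙμ :=
        (integral_condExp hm).symm
    _ = ∫ ω, ((fun ω => g (Φ s ω)) * ℙμ[fun ω => g (Φ t ω) | natFiltration Φ s]) ω ∂ℙμ :=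
        integral_congr_ae hpull
    _ = ∫ ω, g (Φ s ω) * funAct P (t - s) g (Φ s ω) ∂ℙμ := by
        refine integral_congr_ae (hmk.mono fun ω hω => ?_)
        simp only [Pi.mul_apply]
        rw [← hω]

lemma aux_integral_exp_shift {c d a b : ℝ} (hc : c ≠ 0) :
    (∫ u in a..b, Real.exp (c * (u - d)))
      = (Real.exp (c * (b - d)) - Real.exp (c * (a - d))) / c := by
  have hderiv : ∀ u ∈ Set.uIcc a b, HasDerivAt (fun v => Real.exp (c * (v - d)) / c)
      (Real.exp (c * (u - d))) u := by
    intro u _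
    have h1 : HasDerivAt (fun v : ℝ => c * (v - d)) c u := by
      simpa using ((hasDerivAt_id u).sub_const d).const_mul c
    have h3 := (h1.exp).div_const c
    simpa [mul_div_assoc, mul_div_cancel_right₀ _ hc] using h3
  rw [intervalIntegral.integral_eq_sub_of_hasDerivAt hderiv
    ((Real.continuous_exp.comp (by continuity)).intervalIntegrable a b)]
  ring

lemma aux_exp_integral_bound {γ n s : ℝ} (hγ : 0 < γ) (hn : 0 ≤ n) (hs0 : 0 ≤ s)
    (hsn : s ≤ n) :
    (∫ u in Set.Ioc (0:ℝ) n, Real.exp (-γ * |s - u|)) ≤ 2 / γ := by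
  have hcont : Continuous fun u : ℝ => Real.exp (-γ * |s - u|) :=
    Real.continuous_exp.comp (continuous_const.mul ((continuous_const.sub continuous_id).abs))
  rw [← intervalIntegral.integral_of_le hn]
  have hsplit : (∫ u in (0:ℝ)..s, Real.exp (-γ * |s - u|))
      + (∫ u in s..n, Real.exp (-γ * |s - u|))
      = ∫ u in (0:ℝ)..n, Real.exp (-γ * |s - u|) :=
    intervalIntegral.integral_add_adjacent_intervals
      (hcont.intervalIntegrable _ _) (hcont.intervalIntegrable _ _)
  rw [← hsplit]
  have h1 : (∫ u in (0:ℝ)..s, Real.exp (-γ * |s - u|))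
      = ∫ u in (0:ℝ)..s, Real.exp (γ * (u - s)) := by
    refine intervalIntegral.integral_congr fun u hu => ?_
    rw [Set.uIcc_of_le hs0] at hu
    have : |s - u| = s - u := abs_of_nonneg (by linarith [hu.2])
    rw [this]
    congr 1; ring
  have h2 : (∫ u in s..n, Real.exp (-γ * |s - u|))
      = ∫ u in s..n, Real.exp ((-γ) * (u - s)) := by
    refine intervalIntegral.integral_congr fun u hu => ?_
    rw [Set.uIcc_of_le hsn] at hu
    have : |s - u| = u - s := by
      rw [abs_sub_comm]; exact abs_of_nonneg (by linarith [hu.1])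
    rw [this]
  rw [h1, h2, aux_integral_exp_shift (ne_of_gt hγ),
    aux_integral_exp_shift (ne_of_lt (by linarith : -γ < 0))]
  have e1 : Real.exp (γ * (s - s)) = 1 := by simp
  have e2 : Real.exp ((-γ) * (s - s)) = 1 := by simp
  rw [e1, e2]
  have p1 : (0:ℝ) < Real.exp (γ * (0 - s)) := Real.exp_pos _
  have p2 : (0:ℝ) < Real.exp ((-γ) * (n - s)) := Real.exp_pos _
  rw [div_neg, ← neg_div, neg_sub, ← add_div]
  rw [div_le_div_iff_of_pos_right hγ]
  nlinarith [p1.le, p2.le]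

/-- Under (A2)–(A4) there is a finite constant `D` such that
`E_μ[I_n(g)²] ≤ D·n` for every positive integer `n`. -/
theorem second_moment_linear_bound
    (P : ℝ → X → Measure X) (hP : IsMarkovSemigroup P)
    (γ ζ : ℝ) (x₀ : X) (μ μstar : Measure X)
    [IsProbabilityMeasure μ] [IsProbabilityMeasure μstar]
    (hA2 : CondA2 P) (hA3 : CondA3 P γ) (hA4 : CondA4 P μ x₀ ζ)
    (hinv : ∀ t, 0 ≤ t → measAct P t μstar = μstar)
    (g : X → ℝ) (K : ℝ≥0) (hLip : LipschitzWith K g) (hBd : ∃ C, ∀ x, |g x| ≤ C)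
    (hmean : ∫ x, g x ∂μstar = 0)
    (ℙμ : Measure Ω) [IsProbabilityMeasure ℙμ]
    (Φ : ℝ → Ω → X) (hΦ : IsMarkovProcess P Φ ℙμ μ) :
    ∃ D : ℝ, ∀ n : ℕ, 0 < n →
      Integrable (fun ω => (addFun g Φ (n : ℝ) ω) ^ 2) ℙμ ∧
      (∫ ω, (addFun g Φ (n : ℝ) ω) ^ 2 ∂ℙμ) ≤ D * n := by
  obtain ⟨hζ2, M, hM⟩ := hA4
  have hζ1 : (1:ℝ) ≤ ζ := by linarith
  have hγ : 0 < γ := hA3.2.1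
  obtain ⟨C₀, hC₀⟩ := hBd
  have hC₀0 : 0 ≤ C₀ := le_trans (abs_nonneg _) (hC₀ x₀)
  have hgm : Measurable g := hLip.continuous.measurable
  obtain ⟨hmint, hmle⟩ := aux_mustar_moment hP hA3 hζ1 hM hinv
  set mm : ℝ := ∫ y, dist x₀ y ∂μstar with hmmdef
  have hmm0 : 0 ≤ mm := integral_nonneg fun y => dist_nonneg
  set B : ℝ := 1 + max M 0 with hBdef
  have hB0 : (0:ℝ) ≤ B := by positivity
  -- decay estimate for `P_u g`
  have hdecay : ∀ u : ℝ, 0 ≤ u → ∀ x : X,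
      |funAct P u g x| ≤ ((K:ℝ) * Real.exp (-γ * u)) * (dist x₀ x + mm) := by
    intro u hu x
    have hzero : ∫ y, funAct P u g y ∂μstar = 0 := by
      have hb := aux_integral_bind_of_bound hP hu hgm hC₀ (ν := μstar)
      rw [show μstar.bind (P u) = measAct P u μstar from rfl, hinv u hu] at hb
      rw [← hb]; exact hmean
    have hfa_sm := aux_funAct_sm hP hgm.stronglyMeasurable hu
    have hfa_int : Integrable (funAct P u g) μstar :=
      aux_integrable_of_bound hfa_sm.aestronglyMeasurable C₀
        (fun x => aux_abs_funAct_le hP hC₀ hu x)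
    have hrep : funAct P u g x = ∫ y, (funAct P u g x - funAct P u g y) ∂μstar := by
      rw [integral_sub (integrable_const _) hfa_int, integral_const, hzero]; simp
    have habs : ∀ y : X, |funAct P u g x - funAct P u g y|
        ≤ ((K:ℝ) * Real.exp (-γ * u)) * (dist x₀ x + dist x₀ y) := by
      intro y
      have h1 := aux_funAct_lipK hP hA3 hLip hu x y
      have h2 : dist x y ≤ dist x₀ x + dist x₀ y := by
        rw [dist_comm x₀ x]; exact dist_triangle x x₀ y
      calc |funAct P u g x - funAct P u g y|
          ≤ (K:ℝ) * (Real.exp (-γ * u) * dist x y) := h1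
        _ = ((K:ℝ) * Real.exp (-γ * u)) * dist x y := by ring
        _ ≤ ((K:ℝ) * Real.exp (-γ * u)) * (dist x₀ x + dist x₀ y) :=
            mul_le_mul_of_nonneg_left h2 (by positivity)
    have hi1 : Integrable (fun y => |funAct P u g x - funAct P u g y|) μstar :=
      ((integrable_const (funAct P u g x)).sub hfa_int).abs
    have hi2 : Integrable
        (fun y => ((K:ℝ) * Real.exp (-γ * u)) * (dist x₀ x + dist x₀ y)) μstar :=
      (((integrable_const (dist x₀ x)).add hmint).const_mul _)
    calc |funAct P u g x| = |∫ y, (funAct P u g x - funAct P u g y) ∂μstar| := by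
          rw [← hrep]
      _ ≤ ∫ y, |funAct P u g x - funAct P u g y| ∂μstar := by
          simpa [Real.norm_eq_abs] using
            norm_integral_le_integral_norm (μ := μstar)
              (fun y => funAct P u g x - funAct P u g y)
      _ ≤ ∫ y, ((K:ℝ) * Real.exp (-γ * u)) * (dist x₀ x + dist x₀ y) ∂μstar :=
          integral_mono hi1 hi2 habs
      _ = ((K:ℝ) * Real.exp (-γ * u)) * (dist x₀ x + mm) := by
          rw [integral_const_mul, integral_add (integrable_const _) hmint, integral_const]
          simp [← hmmdef]
  -- moments along the process
  have hEdist : ∀ s : ℝ, 0 ≤ s → Integrable (fun ω => dist x₀ (Φ s ω)) ℙμ ∧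
      (∫ ω, dist x₀ (Φ s ω) ∂ℙμ) ≤ B := by
    intro s hs
    haveI : IsProbabilityMeasure (measAct P s μ) := aux_isProb_bind hP hs
    have h1 := aux_int_of_lint (x₀ := x₀) hB0 (aux_lint_dist_le hζ1 (hM s hs))
    have hmap := hΦ.law s hs
    have hdm : Measurable fun x : X => dist x₀ x := measurable_const.dist measurable_id
    have hPhim : Measurable (Φ s) := aux_meas_Phi hΦ.jointMeas s
    constructor
    · have h2 := h1.1
      rw [← hmap] at h2
      exact (integrable_map_measure hdm.aestronglyMeasurable hPhim.aemeasurable).mp h2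
    · have h2 := h1.2
      rw [← hmap] at h2
      rwa [integral_map hPhim.aemeasurable hdm.aestronglyMeasurable] at h2
  -- correlation bound
  set A : ℝ := C₀ * ((K:ℝ) * (B + mm)) with hAdef
  have hA0 : 0 ≤ A := by positivity
  have hcorr : ∀ s t : ℝ, 0 ≤ s → s ≤ t →
      |∫ ω, g (Φ s ω) * g (Φ t ω) ∂ℙμ| ≤ A * Real.exp (-γ * (t - s)) := by
    intro s t hs hst
    have hu : (0:ℝ) ≤ t - s := by linarith
    rw [aux_markov_integral hΦ hgm hC₀ hC₀0 hs hst]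
    have hPhim : Measurable (Φ s) := aux_meas_Phi hΦ.jointMeas s
    have hfa_sm := aux_funAct_sm hP hgm.stronglyMeasurable hu
    have hbnd : ∀ ω, |g (Φ s ω) * funAct P (t - s) g (Φ s ω)|
        ≤ (C₀ * ((K:ℝ) * Real.exp (-γ * (t - s)))) * (dist x₀ (Φ s ω) + mm) := by
      intro ω
      rw [abs_mul]
      calc |g (Φ s ω)| * |funAct P (t - s) g (Φ s ω)|
          ≤ C₀ * (((K:ℝ) * Real.exp (-γ * (t - s))) * (dist x₀ (Φ s ω) + mm)) :=
            mul_le_mul (hC₀ _) (hdecay (t - s) hu _)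
              (abs_nonneg _) hC₀0
        _ = (C₀ * ((K:ℝ) * Real.exp (-γ * (t - s)))) * (dist x₀ (Φ s ω) + mm) := by
            ring
    have hprod_meas : AEStronglyMeasurable
        (fun ω => g (Φ s ω) * funAct P (t - s) g (Φ s ω)) ℙμ :=
      ((hgm.comp hPhim).mul (hfa_sm.measurable.comp hPhim)).aestronglyMeasurable
    have hi1 : Integrable (fun ω => g (Φ s ω) * funAct P (t - s) g (Φ s ω)) ℙμ :=
      aux_integrable_of_bound hprod_meas (C₀ * C₀) fun ω => by
        rw [abs_mul]
        exact mul_le_mul (hC₀ _) (aux_abs_funAct_le hP hC₀ hu _) (abs_nonneg _) hC₀0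
    have hi2 : Integrable (fun ω => (C₀ * ((K:ℝ) * Real.exp (-γ * (t - s)))) *
        (dist x₀ (Φ s ω) + mm)) ℙμ :=
      (((hEdist s hs).1.add (integrable_const mm)).const_mul _)
    calc |∫ ω, g (Φ s ω) * funAct P (t - s) g (Φ s ω) ∂ℙμ|
        ≤ ∫ ω, |g (Φ s ω) * funAct P (t - s) g (Φ s ω)| ∂ℙμ := by
          simpa only [Real.norm_eq_abs] using
            norm_integral_le_integral_norm (μ := ℙμ)
              (fun ω => g (Φ s ω) * funAct P (t - s) g (Φ s ω))
      _ ≤ ∫ ω, (C₀ * ((K:ℝ) * Real.exp (-γ * (t - s)))) *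
            (dist x₀ (Φ s ω) + mm) ∂ℙμ := integral_mono hi1.abs hi2 hbnd
      _ = (C₀ * ((K:ℝ) * Real.exp (-γ * (t - s)))) *
            ((∫ ω, dist x₀ (Φ s ω) ∂ℙμ) + mm) := by
          rw [integral_const_mul, integral_add (hEdist s hs).1 (integrable_const _),
            integral_const]
          simp
      _ ≤ A * Real.exp (-γ * (t - s)) := by
          have h3 := (hEdist s hs).2
          have h4 : (∫ ω, dist x₀ (Φ s ω) ∂ℙμ) + mm ≤ B + mm := by linarith
          have h5 : (0:ℝ) ≤ C₀ * ((K:ℝ) * Real.exp (-γ * (t - s))) := by positivity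
          calc (C₀ * ((K:ℝ) * Real.exp (-γ * (t - s)))) *
                ((∫ ω, dist x₀ (Φ s ω) ∂ℙμ) + mm)
              ≤ (C₀ * ((K:ℝ) * Real.exp (-γ * (t - s)))) * (B + mm) :=
                mul_le_mul_of_nonneg_left h4 h5
            _ = A * Real.exp (-γ * (t - s)) := by rw [hAdef]; ring
  -- conclusion for each n
  refine ⟨A * (2 / γ), ?_⟩
  intro n hn
  have hn0 : (0:ℝ) ≤ (n:ℝ) := Nat.cast_nonneg n
  set ν : Measure ℝ := volume.restrict (Set.Ioc (0:ℝ) (n:ℝ)) with hνdef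
  haveI : IsFiniteMeasure ν := by
    constructor
    rw [hνdef, Measure.restrict_apply_univ]
    exact measure_Ioc_lt_top
  have hνuniv : (ν univ).toReal = (n:ℝ) := by
    rw [hνdef, Measure.restrict_apply_univ, Real.volume_Ioc]
    simp [hn0]
  have hjm : Measurable fun q : Ω × ℝ => g (Φ q.2 q.1) :=
    hgm.comp (hΦ.jointMeas.comp (measurable_snd.prodMk measurable_fst))
  have haddrep : ∀ ω, addFun g Φ (n:ℝ) ω = ∫ s, g (Φ s ω) ∂ν := by
    intro ω
    rw [addFun, intervalIntegral.integral_of_le hn0]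
  have haddFun_sm : StronglyMeasurable fun ω => addFun g Φ (n:ℝ) ω := by
    have h := (hjm.stronglyMeasurable).integral_prod_right' (ν := ν)
    have heq : (fun ω => addFun g Φ (n:ℝ) ω) = fun ω => ∫ s, g (Φ s ω) ∂ν :=
      funext haddrep
    rw [heq]
    exact h
  have haddbd : ∀ ω, |addFun g Φ (n:ℝ) ω| ≤ C₀ * n := by
    intro ω
    rw [haddrep ω]
    calc |∫ s, g (Φ s ω) ∂ν| = ‖∫ s, g (Φ s ω) ∂ν‖ := (Real.norm_eq_abs _).symm
      _ ≤ C₀ * (ν univ).toReal := norm_integral_le_of_norm_le_const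
          (ae_of_all _ fun s => by simpa [Real.norm_eq_abs] using hC₀ (Φ s ω))
      _ = C₀ * n := by rw [hνuniv]
  have hIntSq : Integrable (fun ω => addFun g Φ (n:ℝ) ω ^ 2) ℙμ := by
    apply aux_integrable_of_bound
      ((haddFun_sm.measurable.pow_const 2).aestronglyMeasurable) ((C₀ * n) ^ 2)
    intro ω
    rw [abs_pow]
    exact pow_le_pow_left₀ (abs_nonneg _) (haddbd ω) 2
  refine ⟨hIntSq, ?_⟩
  -- double integral representation
  have hsq : ∀ ω, addFun g Φ (n:ℝ) ω ^ 2
      = ∫ z : ℝ × ℝ, g (Φ z.1 ω) * g (Φ z.2 ω) ∂(ν.prod ν) := by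
    intro ω
    rw [haddrep ω, pow_two,
      ← integral_prod_mul (μ := ν) (ν := ν) (f := fun s => g (Φ s ω))
        (g := fun s => g (Φ s ω))]
  have hGmeas : Measurable (Function.uncurry
      fun (ω : Ω) (z : ℝ × ℝ) => g (Φ z.1 ω) * g (Φ z.2 ω)) := by
    have h1 : Measurable fun q : Ω × (ℝ × ℝ) => g (Φ q.2.1 q.1) :=
      hgm.comp (hΦ.jointMeas.comp ((measurable_fst.comp measurable_snd).prodMk
        measurable_fst))
    have h2 : Measurable fun q : Ω × (ℝ × ℝ) => g (Φ q.2.2 q.1) :=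
      hgm.comp (hΦ.jointMeas.comp ((measurable_snd.comp measurable_snd).prodMk
        measurable_fst))
    exact h1.mul h2
  have hGint : Integrable (Function.uncurry
      fun (ω : Ω) (z : ℝ × ℝ) => g (Φ z.1 ω) * g (Φ z.2 ω)) (ℙμ.prod (ν.prod ν)) :=
    aux_integrable_of_bound hGmeas.aestronglyMeasurable (C₀ * C₀) fun q => by
      show |g (Φ q.2.1 q.1) * g (Φ q.2.2 q.1)| ≤ C₀ * C₀
      rw [abs_mul]
      exact mul_le_mul (hC₀ _) (hC₀ _) (abs_nonneg _) hC₀0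
  have hswap := integral_integral_swap hGint
  -- the function z ↦ ∫ g(Φ_{z₁})g(Φ_{z₂}) dℙ
  have hφsm : StronglyMeasurable fun z : ℝ × ℝ =>
      ∫ ω, g (Φ z.1 ω) * g (Φ z.2 ω) ∂ℙμ := by
    have hm : StronglyMeasurable fun q : (ℝ × ℝ) × Ω =>
        g (Φ q.1.1 q.2) * g (Φ q.1.2 q.2) := by
      have h1 : Measurable fun q : (ℝ × ℝ) × Ω => g (Φ q.1.1 q.2) :=
        hgm.comp (hΦ.jointMeas.comp ((measurable_fst.comp measurable_fst).prodMk
          measurable_snd))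
      have h2 : Measurable fun q : (ℝ × ℝ) × Ω => g (Φ q.1.2 q.2) :=
        hgm.comp (hΦ.jointMeas.comp ((measurable_snd.comp measurable_fst).prodMk
          measurable_snd))
      exact (h1.mul h2).stronglyMeasurable
    exact hm.integral_prod_right' (ν := ℙμ)
  have hφint : Integrable (fun z : ℝ × ℝ =>
      ∫ ω, g (Φ z.1 ω) * g (Φ z.2 ω) ∂ℙμ) (ν.prod ν) :=
    aux_integrable_of_bound hφsm.aestronglyMeasurable (C₀ * C₀) fun z => by
      calc |∫ ω, g (Φ z.1 ω) * g (Φ z.2 ω) ∂ℙμ|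
          = ‖∫ ω, g (Φ z.1 ω) * g (Φ z.2 ω) ∂ℙμ‖ := (Real.norm_eq_abs _).symm
        _ ≤ (C₀ * C₀) * (ℙμ univ).toReal := norm_integral_le_of_norm_le_const
            (ae_of_all _ fun ω => by
              rw [Real.norm_eq_abs, abs_mul]
              exact mul_le_mul (hC₀ _) (hC₀ _) (abs_nonneg _) hC₀0)
        _ = C₀ * C₀ := by simp
  have hψcont : Continuous fun z : ℝ × ℝ => A * Real.exp (-γ * |z.1 - z.2|) :=
    continuous_const.mul (Real.continuous_exp.comp
      (continuous_const.mul ((continuous_fst.sub continuous_snd).abs)))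
  have hψint : Integrable (fun z : ℝ × ℝ => A * Real.exp (-γ * |z.1 - z.2|))
      (ν.prod ν) :=
    aux_integrable_of_bound hψcont.aestronglyMeasurable A fun z => by
      rw [abs_mul, abs_of_nonneg hA0, abs_of_pos (Real.exp_pos _)]
      have h1 : Real.exp (-γ * |z.1 - z.2|) ≤ 1 := by
        rw [← Real.exp_zero]
        apply Real.exp_le_exp.mpr
        have : (0:ℝ) ≤ |z.1 - z.2| := abs_nonneg _
        nlinarith
      nlinarith [hA0]
  have haez : ∀ᵐ z : ℝ × ℝ ∂(ν.prod ν),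
      (∫ ω, g (Φ z.1 ω) * g (Φ z.2 ω) ∂ℙμ) ≤ A * Real.exp (-γ * |z.1 - z.2|) := by
    have hres : ν.prod ν = (volume.prod volume).restrict
        ((Set.Ioc (0:ℝ) (n:ℝ)) ×ˢ (Set.Ioc (0:ℝ) (n:ℝ))) := by
      rw [hνdef, Measure.prod_restrict]
    rw [hres]
    filter_upwards [ae_restrict_mem (measurableSet_Ioc.prod measurableSet_Ioc)] with z hz
    obtain ⟨hz1, hz2⟩ := hz
    rcases le_total z.1 z.2 with hle | hle
    · have h := hcorr z.1 z.2 (le_of_lt hz1.1) hle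
      have habs : |z.1 - z.2| = z.2 - z.1 := by
        rw [abs_sub_comm]; exact abs_of_nonneg (by linarith)
      rw [habs]
      exact (le_abs_self _).trans h
    · have h := hcorr z.2 z.1 (le_of_lt hz2.1) hle
      have habs : |z.1 - z.2| = z.1 - z.2 := abs_of_nonneg (by linarith)
      have hcomm : (∫ ω, g (Φ z.1 ω) * g (Φ z.2 ω) ∂ℙμ)
          = ∫ ω, g (Φ z.2 ω) * g (Φ z.1 ω) ∂ℙμ := by
        refine integral_congr_ae (ae_of_all _ fun ω => ?_)
        ring
      rw [habs, hcomm]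
      exact (le_abs_self _).trans h
  -- the exponential double integral
  have hexp_bound : (∫ z : ℝ × ℝ, Real.exp (-γ * |z.1 - z.2|) ∂(ν.prod ν))
      ≤ 2 / γ * n := by
    have hexp_cont : Continuous fun z : ℝ × ℝ => Real.exp (-γ * |z.1 - z.2|) :=
      Real.continuous_exp.comp
        (continuous_const.mul ((continuous_fst.sub continuous_snd).abs))
    have hexp1 : ∀ z : ℝ × ℝ, |Real.exp (-γ * |z.1 - z.2|)| ≤ 1 := fun z => by
      rw [abs_of_pos (Real.exp_pos _), ← Real.exp_zero]
      apply Real.exp_le_exp.mpr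
      have : (0:ℝ) ≤ |z.1 - z.2| := abs_nonneg _
      nlinarith
    have hexp_int : Integrable (fun z : ℝ × ℝ => Real.exp (-γ * |z.1 - z.2|))
        (ν.prod ν) :=
      aux_integrable_of_bound hexp_cont.aestronglyMeasurable 1 hexp1
    rw [integral_prod _ hexp_int]
    have hFsm : StronglyMeasurable fun s : ℝ => ∫ t, Real.exp (-γ * |s - t|) ∂ν :=
      (hexp_cont.stronglyMeasurable).integral_prod_right' (ν := ν)
    have hFbd : ∀ s : ℝ, |∫ t, Real.exp (-γ * |s - t|) ∂ν| ≤ (n:ℝ) := by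
      intro s
      calc |∫ t, Real.exp (-γ * |s - t|) ∂ν|
          = ‖∫ t, Real.exp (-γ * |s - t|) ∂ν‖ := (Real.norm_eq_abs _).symm
        _ ≤ 1 * (ν univ).toReal := norm_integral_le_of_norm_le_const
            (ae_of_all _ fun t => by
              simpa [Real.norm_eq_abs] using hexp1 (s, t))
        _ = (n:ℝ) := by rw [hνuniv, one_mul]
    have hFint : Integrable (fun s : ℝ => ∫ t, Real.exp (-γ * |s - t|) ∂ν) ν :=
      aux_integrable_of_bound hFsm.aestronglyMeasurable _ hFbd
    have haes : ∀ᵐ s ∂ν, (∫ t, Real.exp (-γ * |s - t|) ∂ν) ≤ 2 / γ := by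
      rw [hνdef]
      filter_upwards [ae_restrict_mem measurableSet_Ioc] with s hs
      exact aux_exp_integral_bound hγ hn0 (le_of_lt hs.1) hs.2
    calc (∫ s, ∫ t, Real.exp (-γ * |s - t|) ∂ν ∂ν)
        ≤ ∫ _s, (2 / γ) ∂ν := integral_mono_ae hFint (integrable_const _) haes
      _ = 2 / γ * n := by rw [integral_const, show ν.real univ = (ν univ).toReal from rfl, hνuniv, smul_eq_mul]; ring
  calc ∫ ω, addFun g Φ (n:ℝ) ω ^ 2 ∂ℙμ
      = ∫ ω, ∫ z : ℝ × ℝ, g (Φ z.1 ω) * g (Φ z.2 ω) ∂(ν.prod ν) ∂ℙμ :=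
        integral_congr_ae (ae_of_all _ hsq)
    _ = ∫ z : ℝ × ℝ, (∫ ω, g (Φ z.1 ω) * g (Φ z.2 ω) ∂ℙμ) ∂(ν.prod ν) := hswap
    _ ≤ ∫ z : ℝ × ℝ, A * Real.exp (-γ * |z.1 - z.2|) ∂(ν.prod ν) :=
        integral_mono_ae hφint hψint haez
    _ = A * ∫ z : ℝ × ℝ, Real.exp (-γ * |z.1 - z.2|) ∂(ν.prod ν) := integral_const_mul _ _
    _ ≤ A * (2 / γ * n) := mul_le_mul_of_nonneg_left hexp_bound hA0
    _ = A * (2 / γ) * n := by ring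


end
end
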